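/- Let G = (V,E) be a finite simple graph on V = {1,…,n} with n ≥ 1 and let k ∈ ℕ with k ≤ n. Then z^E_k(G) ≤ z^C_k(G), where z^E_k(G) = z^E_{J_k}(G) and z^C_k(G) = z^C_{J_k}(G) for J_k = { I ⊆ V : |I| = k }. -/

import Mathlib

open Matrix

noncomputable section

/-- A stable set vector of a graph `G`: a 0/1 vector with `s i * s j = 0` on edges. -/
def IsStableVec {V : Type*} (G : SimpleGraph V) (s : V → ℝ) : Prop :=
  (∀ i, s i = 0 ∨ s i = 1) ∧ ∀ i j, G.Adj i j → s i * s j = 0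

/-- The squared stable set polytope `STAB²(G) = conv{ s sᵀ : s ∈ S(G) }`. -/
def stab2 {V : Type*} (G : SimpleGraph V) : Set (Matrix V V ℝ) :=
  convexHull ℝ { M | ∃ s, IsStableVec G s ∧ M = Matrix.vecMulVec s s }

/-- The scaled squared stable set polytope
`SSTAB²(G) = conv({ (1/(sᵀs)) s sᵀ : s ∈ S(G), s ≠ 0 } ∪ {0})`. -/
def sstab2 {V : Type*} [Fintype V] (G : SimpleGraph V) : Set (Matrix V V ℝ) :=
  convexHull ℝ
    ({ M | ∃ s, IsStableVec G s ∧ s ≠ 0 ∧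
        M = (∑ k, s k * s k)⁻¹ • Matrix.vecMulVec s s } ∪ {(0 : Matrix V V ℝ)})

/-- The feasible region `TH²(G)` of the SDP (Tn+1): pairs `(x, X)` with `X` symmetric,
`diag X = x`, `X i j = 0` on edges and `X - x xᵀ` positive semidefinite. -/
def th2 {n : ℕ} (G : SimpleGraph (Fin n)) :
    Set ((Fin n → ℝ) × Matrix (Fin n) (Fin n) ℝ) :=
  { p | p.2.IsSymm ∧ (∀ i, p.2 i i = p.1 i) ∧
      (∀ i j, G.Adj i j → p.2 i j = 0) ∧ (p.2 - Matrix.vecMulVec p.1 p.1).PosSemidef }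

/-- The feasible region `CTH²(G)` of the SDP (Tn): symmetric PSD matrices with trace 1
vanishing on edges. -/
def cth2 {n : ℕ} (G : SimpleGraph (Fin n)) : Set (Matrix (Fin n) (Fin n) ℝ) :=
  { X | X.IsSymm ∧ X.trace = 1 ∧ (∀ i j, G.Adj i j → X i j = 0) ∧ X.PosSemidef }

/-- The principal submatrix `X_I` of `X` indexed by `I`. -/
def subMat {n : ℕ} (X : Matrix (Fin n) (Fin n) ℝ) (I : Finset (Fin n)) :
    Matrix (I : Set (Fin n)) (I : Set (Fin n)) ℝ :=
  X.submatrix Subtype.val Subtype.val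

/-- The exact subgraph constraint (ESC) for the subgraph of `G` induced by `I`. -/
def escFeas {n : ℕ} (G : SimpleGraph (Fin n)) (X : Matrix (Fin n) (Fin n) ℝ)
    (I : Finset (Fin n)) : Prop :=
  subMat X I ∈ stab2 (G.induce (I : Set (Fin n)))

/-- The scaled exact subgraph constraint (SESC) for the subgraph of `G` induced by `I`. -/
def sescFeas {n : ℕ} (G : SimpleGraph (Fin n)) (X : Matrix (Fin n) (Fin n) ℝ)
    (I : Finset (Fin n)) : Prop :=
  subMat X I ∈ sstab2 (G.induce (I : Set (Fin n)))

/-- `z^E_J(G)`: optimal value of (Tn+1) with the ESCs for all `I ∈ J`. -/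
def zE {n : ℕ} (G : SimpleGraph (Fin n)) (J : Set (Finset (Fin n))) : ℝ :=
  sSup { r | ∃ x X, (x, X) ∈ th2 G ∧ (∀ I ∈ J, escFeas G X I) ∧ r = ∑ i, x i }

/-- `z^C_J(G)`: optimal value of (Tn) with the ESCs for all `I ∈ J`. -/
def zC {n : ℕ} (G : SimpleGraph (Fin n)) (J : Set (Finset (Fin n))) : ℝ :=
  sSup { r | ∃ X, X ∈ cth2 G ∧ (∀ I ∈ J, escFeas G X I) ∧ r = ∑ i, ∑ j, X i j }

/-- `z^S_J(G)`: optimal value of (Tn) with the SESCs for all `I ∈ J`. -/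
def zS {n : ℕ} (G : SimpleGraph (Fin n)) (J : Set (Finset (Fin n))) : ℝ :=
  sSup { r | ∃ X, X ∈ cth2 G ∧ (∀ I ∈ J, sescFeas G X I) ∧ r = ∑ i, ∑ j, X i j }

/-- The collection `J_k` of all vertex subsets of cardinality `k`. -/
def Jk (n k : ℕ) : Set (Finset (Fin n)) := { I | I.card = k }


section Aux

lemma vecMulVec_posSemidef' {m : ℕ} (s : Fin m → ℝ) : (Matrix.vecMulVec s s).PosSemidef := by
  refine Matrix.PosSemidef.of_dotProduct_mulVec_nonneg ?_ ?_
  · ext i j; simp [Matrix.vecMulVec_apply, mul_comm]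
  · intro x
    have h : star x ⬝ᵥ (Matrix.vecMulVec s s *ᵥ x)
        = (∑ i, s i * x i) * (∑ i, s i * x i) := by
      simp only [star_trivial, dotProduct, Matrix.mulVec, Matrix.vecMulVec_apply,
        Finset.sum_mul, Finset.mul_sum]
      refine Finset.sum_congr rfl fun i _ => Finset.sum_congr rfl fun j _ => by ring
    rw [h]; exact mul_self_nonneg _

lemma psd_entry {m : ℕ} {X : Matrix (Fin m) (Fin m) ℝ} (hX : X.PosSemidef) (i j : Fin m) :
    X i j + X j i ≤ X i i + X j j := by
  by_cases h : i = j
  · subst h; simp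
  · have h2 := hX.dotProduct_mulVec_nonneg (Pi.single i 1 - Pi.single j 1)
    simp only [star_trivial, dotProduct, Matrix.mulVec, Pi.sub_apply, Pi.single_apply,
      mul_sub, sub_mul, mul_ite, ite_mul, mul_one, one_mul, mul_zero, zero_mul,
      Finset.sum_sub_distrib, Finset.sum_ite_eq, Finset.sum_ite_eq', Finset.mem_univ,
      if_true] at h2
    linarith

lemma ones_quad {m : ℕ} (M : Matrix (Fin m) (Fin m) ℝ) :
    star (fun _ : Fin m => (1:ℝ)) ⬝ᵥ (M *ᵥ fun _ => (1:ℝ)) = ∑ i, ∑ j, M i j := by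
  simp [dotProduct, Matrix.mulVec]

lemma zero_mem_stab2 {V : Type*} (G : SimpleGraph V) : (0 : Matrix V V ℝ) ∈ stab2 G := by
  apply subset_convexHull
  exact ⟨0, ⟨fun i => Or.inl rfl, fun i j _ => by simp⟩, by
    ext i j; simp [Matrix.vecMulVec_apply]⟩

lemma smul_mem_stab2 {V : Type*} {G : SimpleGraph V} {M : Matrix V V ℝ}
    (hM : M ∈ stab2 G) {c : ℝ} (h0 : 0 ≤ c) (h1 : c ≤ 1) : c • M ∈ stab2 G := by
  have h := (convex_convexHull ℝ _) hM (zero_mem_stab2 G) h0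
    (by linarith : (0:ℝ) ≤ 1 - c) (by ring)
  simpa [stab2] using h

lemma subMat_smul {n : ℕ} (c : ℝ) (X : Matrix (Fin n) (Fin n) ℝ) (I : Finset (Fin n)) :
    subMat (c • X) I = c • subMat X I := rfl

/-- The rank-one witness `e_{i0} e_{i0}ᵀ` is feasible for (Tn) with all ESCs,
so `1 ≤ zC`. -/
lemma one_le_zC {n : ℕ} (hn : 1 ≤ n) (G : SimpleGraph (Fin n)) (J : Set (Finset (Fin n)))
    (hbdd : BddAbove { r | ∃ X, X ∈ cth2 G ∧ (∀ I ∈ J, escFeas G X I) ∧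
      r = ∑ i, ∑ j, X i j }) :
    (1 : ℝ) ≤ zC G J := by
  set i0 : Fin n := ⟨0, hn⟩
  set x0 : Fin n → ℝ := fun j => if j = i0 then 1 else 0 with hx0
  have hmem : (1:ℝ) ∈ { r | ∃ X, X ∈ cth2 G ∧ (∀ I ∈ J, escFeas G X I) ∧
      r = ∑ i, ∑ j, X i j } := by
    refine ⟨Matrix.vecMulVec x0 x0, ⟨?_, ?_, ?_, vecMulVec_posSemidef' x0⟩, ?_, ?_⟩
    · ext i j; simp [Matrix.vecMulVec_apply, mul_comm]
    · simp [Matrix.trace, Matrix.diag, Matrix.vecMulVec_apply, hx0, ite_and]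
    · intro i j hij
      have hne : i ≠ j := hij.ne
      simp only [Matrix.vecMulVec_apply, hx0]
      by_cases hi : i = i0 <;> by_cases hj : j = i0 <;>
        simp_all
    · intro I _
      apply subset_convexHull
      refine ⟨fun a => x0 a.1, ⟨fun a => by by_cases h : (a:Fin n) = i0 <;> simp [hx0, h],
        ?_⟩, by ext a b; simp [subMat, Matrix.vecMulVec_apply]⟩
      intro a b hab
      have hne : a ≠ b := hab.ne
      by_cases ha : (a : Fin n) = i0
      · by_cases hb : (b : Fin n) = i0
        · exact absurd (Subtype.ext (ha.trans hb.symm)) hne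
        · simp [hx0, hb]
      · simp [hx0, ha]
    · simp [Matrix.vecMulVec_apply, hx0, Finset.sum_ite_eq', ite_and]
  exact le_csSup hbdd hmem

lemma zC_bddAbove {n : ℕ} (G : SimpleGraph (Fin n)) (J : Set (Finset (Fin n))) :
    BddAbove { r | ∃ X, X ∈ cth2 G ∧ (∀ I ∈ J, escFeas G X I) ∧
      r = ∑ i, ∑ j, X i j } := by
  refine ⟨(n : ℝ), ?_⟩
  rintro r ⟨X, ⟨_, htr, _, hpsd⟩, _, rfl⟩
  have htr' : ∑ i : Fin n, X i i = 1 := htr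
  have hcomm : ∑ i : Fin n, ∑ j : Fin n, X j i = ∑ i : Fin n, ∑ j : Fin n, X i j :=
    Finset.sum_comm
  have h2 : ∑ i : Fin n, ∑ j : Fin n, (X i j + X j i)
      = 2 * ∑ i : Fin n, ∑ j : Fin n, X i j := by
    simp only [Finset.sum_add_distrib, hcomm]; ring
  have h3 : ∑ i : Fin n, ∑ j : Fin n, (X i j + X j i)
      ≤ ∑ i : Fin n, ∑ j : Fin n, (X i i + X j j) :=
    Finset.sum_le_sum fun i _ => Finset.sum_le_sum fun j _ => psd_entry hpsd i j
  have h4 : ∑ i : Fin n, ∑ j : Fin n, (X i i + X j j) = 2 * (n : ℝ) := by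
    have e1 : ∀ i : Fin n, ∑ j : Fin n, (X i i + X j j) = (n : ℝ) * X i i + 1 := by
      intro i
      rw [Finset.sum_add_distrib, Finset.sum_const, htr', Finset.card_univ, Fintype.card_fin,
        nsmul_eq_mul]
    rw [Finset.sum_congr rfl fun i _ => e1 i, Finset.sum_add_distrib, ← Finset.mul_sum, htr',
      Finset.sum_const, Finset.card_univ, Fintype.card_fin, nsmul_eq_mul]
    ring
  linarith

end Aux

/-- `z^E_k(G) ≤ z^C_k(G)` for every level `k ≤ n`. -/
theorem stmt8 {n : ℕ} (hn : 1 ≤ n) (G : SimpleGraph (Fin n)) (k : ℕ) (hk : k ≤ n) :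
    zE G (Jk n k) ≤ zC G (Jk n k) := by
  have hbdd := zC_bddAbove G (Jk n k)
  have h1 : (1:ℝ) ≤ zC G (Jk n k) := one_le_zC hn G (Jk n k) hbdd
  refine Real.sSup_le ?_ (le_trans zero_le_one h1)
  rintro r ⟨x, X, ⟨hsymm', hdiag', hedge', hpsd'⟩, hesc, rfl⟩
  have hsymm : X.IsSymm := hsymm'
  have hdiag : ∀ i, X i i = x i := hdiag'
  have hedge : ∀ i j, G.Adj i j → X i j = 0 := hedge'
  have hpsd : (X - Matrix.vecMulVec x x).PosSemidef := hpsd'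
  clear hsymm' hdiag' hedge' hpsd'
  -- each x i is nonnegative
  have hxnn : ∀ i, 0 ≤ x i := by
    intro i
    have h := hpsd.dotProduct_mulVec_nonneg (Pi.single i 1)
    simp only [star_trivial, dotProduct, Matrix.mulVec, Pi.single_apply, mul_ite, ite_mul,
      mul_one, one_mul, mul_zero, zero_mul, Finset.sum_ite_eq, Finset.sum_ite_eq',
      Finset.mem_univ, if_true, Matrix.sub_apply, Matrix.vecMulVec_apply] at h
    nlinarith [sq_nonneg (x i), hdiag i]
  set t : ℝ := ∑ i, x i with ht
  have htnn : 0 ≤ t := Finset.sum_nonneg fun i _ => hxnn i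
  by_cases hle : t ≤ 1
  · exact le_trans hle h1
  · push_neg at hle
    have htpos : 0 < t := lt_trans zero_lt_one hle
    -- the scaled matrix
    set Y : Matrix (Fin n) (Fin n) ℝ := t⁻¹ • X with hY
    have hXpsd : X.PosSemidef := by
      have := hpsd.add (vecMulVec_posSemidef' x)
      simpa using this
    have hYmem : Y ∈ cth2 G := by
      refine ⟨?_, ?_, ?_, ?_⟩
      · show Yᵀ = Y
        rw [hY, Matrix.transpose_smul, hsymm]
      · have : Y.trace = t⁻¹ * ∑ i, X i i := by
          simp [hY, Matrix.trace, Matrix.diag, Finset.mul_sum]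
        rw [this]
        have : ∑ i, X i i = t := by rw [ht]; exact Finset.sum_congr rfl fun i _ => hdiag i
        rw [this, inv_mul_cancel₀ (ne_of_gt htpos)]
      · intro i j hij
        have h0 : X i j = 0 := hedge i j hij
        show t⁻¹ * X i j = 0
        rw [h0, mul_zero]
      · refine Matrix.PosSemidef.of_dotProduct_mulVec_nonneg ?_ fun v => ?_
        · show (t⁻¹ • X)ᴴ = t⁻¹ • X
          rw [Matrix.conjTranspose_smul, hXpsd.1]
          norm_num
        · have hq := hXpsd.dotProduct_mulVec_nonneg v
          have h2 : star v ⬝ᵥ (Y *ᵥ v) = t⁻¹ * (star v ⬝ᵥ (X *ᵥ v)) := by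
            rw [hY, Matrix.smul_mulVec, dotProduct_smul, smul_eq_mul]
          rw [h2]
          positivity
    have hYesc : ∀ I ∈ Jk n k, escFeas G Y I := by
      intro I hI
      have h := hesc I hI
      rw [escFeas, hY, subMat_smul]
      exact smul_mem_stab2 h (le_of_lt (inv_pos.mpr htpos)) (inv_le_one_of_one_le₀ (le_of_lt hle))
    have hval : t ≤ ∑ i, ∑ j, Y i j := by
      have h := hpsd.dotProduct_mulVec_nonneg (fun _ => (1:ℝ))
      rw [ones_quad] at h
      have hsum : ∑ i, ∑ j, (X - Matrix.vecMulVec x x) i j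
          = (∑ i, ∑ j, X i j) - t * t := by
        simp only [Matrix.sub_apply, Matrix.vecMulVec_apply, Finset.sum_sub_distrib]
        rw [ht, Finset.sum_mul_sum]
      rw [hsum] at h
      have hXsum : t * t ≤ ∑ i, ∑ j, X i j := by linarith
      have : ∑ i, ∑ j, Y i j = t⁻¹ * ∑ i, ∑ j, X i j := by
        simp [hY, Finset.mul_sum]
      rw [this]
      calc t = t⁻¹ * (t * t) := by field_simp
        _ ≤ t⁻¹ * ∑ i, ∑ j, X i j :=
            mul_le_mul_of_nonneg_left hXsum (le_of_lt (inv_pos.mpr htpos))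
    calc t ≤ ∑ i, ∑ j, Y i j := hval
      _ ≤ zC G (Jk n k) := le_csSup hbdd ⟨Y, hYmem, hYesc, rfl⟩
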